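/- An Abelian group G has the finite matching property if and only if G is torsion-free or G is isomorphic to ℤ/pℤ for some prime p. -/

import Mathlib

open scoped Pointwise

/-- A matching from `A` to `B` in an additive abelian group is a bijection
`f : A → B` such that `a + f a ∉ A` for all `a ∈ A`. -/
def IsMatching {G : Type*} [AddCommGroup G] (A B : Set G) (f : A → B) : Prop :=
  Function.Bijective f ∧ ∀ a : A, (a : G) + (f a : G) ∉ A

/-- `G` has the finite matching property if for all nonempty finite subsets `A`, `B`
with `#A = #B` and `0 ∉ B` there is a matching from `A` to `B`. -/
def HasFiniteMatchingProperty (G : Type*) [AddCommGroup G] : Prop :=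
  ∀ A B : Set G, A.Finite → B.Finite → A.Nonempty → B.Nonempty →
    A.ncard = B.ncard → (0 : G) ∉ B → ∃ f : A → B, IsMatching A B f

section Aux

variable {G : Type*} [AddCommGroup G]

/-- Hall-based construction of a matching from a sumset-type cardinality bound. -/
lemma hall_matching [DecidableEq G] {A B : Set G} (hAfin : A.Finite) (hBfin : B.Finite)
    (hcard : A.ncard = B.ncard)
    (key : ∀ A' T : Finset G, ↑A' ⊆ A → A'.Nonempty → ↑T ⊆ B →
      (∀ a ∈ A', ∀ b ∈ T, (a : G) + b ∈ A) → A'.card + T.card ≤ A.ncard) :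
    ∃ f : A → B, IsMatching A B f := by
  classical
  haveI := hAfin.fintype
  haveI := hBfin.fintype
  set t : A → Finset G := fun a => hBfin.toFinset.filter (fun b => (a : G) + b ∉ A) with ht
  have hall : ∀ s : Finset A, s.card ≤ (s.biUnion t).card := by
    intro s
    rcases s.eq_empty_or_nonempty with rfl | hs
    · simp
    set A' : Finset G := s.image Subtype.val with hA'
    have hA'card : A'.card = s.card := Finset.card_image_of_injective _ Subtype.val_injective
    have hA'ne : A'.Nonempty := hs.image _
    have hA'sub : ↑A' ⊆ A := by
      intro x hx
      obtain ⟨a, _, rfl⟩ := Finset.mem_image.mp hx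
      exact a.2
    set T : Finset G := hBfin.toFinset.filter (fun b => ∀ a ∈ A', a + b ∈ A) with hT
    have hTsub : ↑T ⊆ B := by
      intro b hb
      exact hBfin.mem_toFinset.mp (Finset.mem_filter.mp hb).1
    have hTsub' : T ⊆ hBfin.toFinset := Finset.filter_subset _ _
    have hunion : s.biUnion t = hBfin.toFinset \ T := by
      ext b
      simp only [Finset.mem_biUnion, Finset.mem_sdiff, ht, hT, Finset.mem_filter]
      constructor
      · rintro ⟨a, has, hb, hab⟩
        refine ⟨hb, fun h => hab (h.2 _ ?_)⟩
        exact Finset.mem_image.mpr ⟨a, has, rfl⟩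
      · rintro ⟨hb, h⟩
        have h' : ¬ ∀ a ∈ A', a + b ∈ A := fun hh => h ⟨hb, hh⟩
        push_neg at h'
        obtain ⟨a, haA', hab⟩ := h'
        obtain ⟨a', ha's, rfl⟩ := Finset.mem_image.mp haA'
        exact ⟨a', ha's, hb, hab⟩
    have hkey := key A' T hA'sub hA'ne hTsub (fun a ha b hb => (Finset.mem_filter.mp hb).2 a ha)
    have hBcard : hBfin.toFinset.card = B.ncard := (Set.ncard_eq_toFinset_card B hBfin).symm
    have hTle : T.card ≤ hBfin.toFinset.card := Finset.card_le_card hTsub'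
    rw [hunion, Finset.card_sdiff_of_subset hTsub']
    omega
  obtain ⟨f, hfinj, hfmem⟩ := (Finset.all_card_le_biUnion_card_iff_exists_injective t).mp hall
  have hfB : ∀ a : A, f a ∈ B ∧ (a : G) + f a ∉ A := by
    intro a
    have := hfmem a
    rw [ht, Finset.mem_filter, hBfin.mem_toFinset] at this
    exact this
  have hinj : Function.Injective (fun a : A => (⟨f a, (hfB a).1⟩ : B)) := by
    intro x y hxy
    exact hfinj (congrArg Subtype.val hxy)
  refine ⟨fun a => ⟨f a, (hfB a).1⟩, ⟨?_, fun a => (hfB a).2⟩⟩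
  refine (Fintype.bijective_iff_injective_and_card _).mpr ⟨hinj, ?_⟩
  simp only [← Nat.card_eq_fintype_card, Nat.card_coe_set_eq, hcard]

lemma hfmp_of_torsionFree (h : ∀ (g : G) (n : ℕ), 0 < n → n • g = 0 → g = 0) :
    HasFiniteMatchingProperty G := by
  classical
  have htf : IsAddTorsionFree G := isAddTorsionFree_iff_not_isOfFinAddOrder.mpr <| by
    intro g hg hfin
    obtain ⟨n, hn, hgn⟩ := isOfFinAddOrder_iff_nsmul_eq_zero.mp hfin
    exact hg (h g n hn hgn)
  intro A B hAfin hBfin hAne hBne hcard h0B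
  refine hall_matching hAfin hBfin hcard ?_
  intro A' T hA'sub hA'ne hTsub hsum
  have h0T : (0:G) ∉ T := fun h0 => h0B (hTsub h0)
  have hsub : A' + insert (0:G) T ⊆ hAfin.toFinset := by
    intro x hx
    obtain ⟨a, ha, b, hb, rfl⟩ := Finset.mem_add.mp hx
    rcases Finset.mem_insert.mp hb with rfl | hbT
    · rw [add_zero]
      exact hAfin.mem_toFinset.mpr (hA'sub ha)
    · exact hAfin.mem_toFinset.mpr (hsum a ha b hbT)
  have hb := cauchy_davenport_of_isAddTorsionFree hA'ne (Finset.insert_nonempty (0:G) T)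
  rw [Finset.card_insert_of_notMem h0T] at hb
  have hle := Finset.card_le_card hsub
  rw [← Set.ncard_eq_toFinset_card A hAfin] at hle
  omega

lemma hfmp_zmod (p : ℕ) (hp : p.Prime) : HasFiniteMatchingProperty (ZMod p) := by
  classical
  haveI : Fact p.Prime := ⟨hp⟩
  intro A B hAfin hBfin hAne hBne hcard h0B
  have hBle : B.ncard ≤ p - 1 := by
    have hsub : B ⊆ (Set.univ \ {0} : Set (ZMod p)) :=
      fun b hb => ⟨trivial, fun h => h0B (h ▸ hb)⟩
    have h1 : (Set.univ \ {0} : Set (ZMod p)).ncard = p - 1 := by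
      rw [Set.ncard_diff_singleton_of_mem (Set.mem_univ _), Set.ncard_univ,
        Nat.card_eq_fintype_card, ZMod.card]
    calc B.ncard ≤ (Set.univ \ {0} : Set (ZMod p)).ncard :=
          Set.ncard_le_ncard hsub Set.finite_univ.diff
      _ = p - 1 := h1
  refine hall_matching hAfin hBfin hcard ?_
  intro A' T hA'sub hA'ne hTsub hsum
  have h0T : (0:ZMod p) ∉ T := fun h0 => h0B (hTsub h0)
  have hsub : A' + insert (0:ZMod p) T ⊆ hAfin.toFinset := by
    intro x hx
    obtain ⟨a, ha, b, hb, rfl⟩ := Finset.mem_add.mp hx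
    rcases Finset.mem_insert.mp hb with rfl | hbT
    · rw [add_zero]
      exact hAfin.mem_toFinset.mpr (hA'sub ha)
    · exact hAfin.mem_toFinset.mpr (hsum a ha b hbT)
  have hb := ZMod.cauchy_davenport hp hA'ne (Finset.insert_nonempty (0:ZMod p) T)
  rw [Finset.card_insert_of_notMem h0T] at hb
  have hle := Finset.card_le_card hsub
  rw [← Set.ncard_eq_toFinset_card A hAfin] at hle
  have hp2 := hp.two_le
  rcases min_le_iff.mp hb with h | h
  · omega
  · omega

lemma hfmp_congr {H : Type*} [AddCommGroup H] (e : G ≃+ H)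
    (h : HasFiniteMatchingProperty H) : HasFiniteMatchingProperty G := by
  intro A B hAfin hBfin hAne hBne hcard h0B
  have h0B' : (0 : H) ∉ e '' B := by
    rintro ⟨b, hb, hb0⟩
    have : b = 0 := by
      apply e.injective; rw [hb0, map_zero]
    exact h0B (this ▸ hb)
  obtain ⟨f, hfbij, hfmatch⟩ := h (e '' A) (e '' B) (hAfin.image e) (hBfin.image e)
    (hAne.image e) (hBne.image e)
    (by rw [Set.ncard_image_of_injective _ e.injective,
      Set.ncard_image_of_injective _ e.injective, hcard]) h0B'
  set eA : A → (e '' A : Set H) := fun a => ⟨e a, a.1, a.2, rfl⟩ with heA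
  set eB : B → (e '' B : Set H) := fun b => ⟨e b, b.1, b.2, rfl⟩ with heB
  have heAbij : Function.Bijective eA := by
    constructor
    · intro x y hxy
      exact Subtype.ext (e.injective (congrArg Subtype.val hxy))
    · rintro ⟨y, a, ha, rfl⟩
      exact ⟨⟨a, ha⟩, rfl⟩
  have heBbij : Function.Bijective eB := by
    constructor
    · intro x y hxy
      exact Subtype.ext (e.injective (congrArg Subtype.val hxy))
    · rintro ⟨y, b, hb, rfl⟩
      exact ⟨⟨b, hb⟩, rfl⟩
  set eBe := Equiv.ofBijective eB heBbij with heBe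
  refine ⟨fun a => eBe.symm (f (eA a)), ⟨?_, ?_⟩⟩
  · exact eBe.symm.bijective.comp (hfbij.comp heAbij)
  · intro a
    intro hmem
    have hval : e ((eBe.symm (f (eA a)) : B) : G) = ((f (eA a) : H)) := by
      have := eBe.apply_symm_apply (f (eA a))
      have := congrArg Subtype.val this
      exact this
    apply hfmatch (eA a)
    refine ⟨(a : G) + ((eBe.symm (f (eA a)) : B) : G), hmem, ?_⟩
    rw [map_add, hval]

end Aux

section Forward

variable {G : Type*} [AddCommGroup G]

lemma zmultiples_eq_top_of_hfmp (h : HasFiniteMatchingProperty G)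
    (g : G) (hg : g ≠ 0) (hford : IsOfFinAddOrder g) :
    (AddSubgroup.zmultiples g : Set G) = Set.univ := by
  by_contra hne
  obtain ⟨x, hx⟩ : ∃ x : G, x ∉ (AddSubgroup.zmultiples g : Set G) := by
    by_contra hc
    push_neg at hc
    exact hne (Set.eq_univ_of_forall hc)
  set Hs : Set G := (AddSubgroup.zmultiples g : Set G) with hHs
  have hHfin : Hs.Finite := hford.finite_zmultiples
  have hHcard : Hs.ncard = addOrderOf g := by
    rw [← Nat.card_coe_set_eq, hHs, SetLike.coe_sort_coe]
    exact Nat.card_zmultiples g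
  have hord2 : 2 ≤ addOrderOf g := by
    have h0 : addOrderOf g ≠ 0 := hford.addOrderOf_pos.ne'
    have h1 : addOrderOf g ≠ 1 := fun h1 => hg (AddMonoid.addOrderOf_eq_one_iff.mp h1)
    omega
  have h0H : (0 : G) ∈ Hs := (AddSubgroup.zmultiples g).zero_mem
  have hxne0 : x ≠ 0 := fun h0 => hx (h0 ▸ h0H)
  set B : Set G := insert x (Hs \ {0}) with hB
  have hBfin : B.Finite := (hHfin.diff.insert x)
  have hBcard : B.ncard = Hs.ncard := by
    rw [hB, Set.ncard_insert_of_notMem (fun hm => hx hm.1) hHfin.diff,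
      Set.ncard_diff_singleton_of_mem h0H]
    omega
  have h0B : (0 : G) ∉ B := by
    rintro (h0 | h0)
    · exact hxne0 h0.symm
    · exact h0.2 rfl
  obtain ⟨f, ⟨hfinj, _⟩, hfm⟩ := h Hs B hHfin hBfin ⟨0, h0H⟩ ⟨x, Set.mem_insert _ _⟩
    hBcard.symm h0B
  have hgH : g ∈ Hs := AddSubgroup.mem_zmultiples g
  set a₁ : Hs := ⟨0, h0H⟩
  set a₂ : Hs := ⟨g, hgH⟩
  have ha12 : a₁ ≠ a₂ := fun hEq => hg (congrArg Subtype.val hEq).symm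
  have hfne : f a₁ ≠ f a₂ := fun hEq => ha12 (hfinj hEq)
  have main : ∀ a : Hs, (f a : G) ≠ x → False := by
    intro a hax
    have hfa : (f a : G) ∈ B := (f a).2
    rcases hfa with hfa | hfa
    · exact hax hfa
    · exact hfm a (AddSubgroup.add_mem _ a.2 hfa.1)
  have : (f a₁ : G) = x ∧ (f a₂ : G) = x := by
    constructor
    · by_contra hc; exact main a₁ hc
    · by_contra hc; exact main a₂ hc
  exact hfne (Subtype.ext (this.1.trans this.2.symm))

lemma forward_dir (h : HasFiniteMatchingProperty G)
    (g : G) (hg : g ≠ 0) (n : ℕ) (hn : 0 < n) (hng : n • g = 0) :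
    ∃ p : ℕ, p.Prime ∧ Nonempty (G ≃+ ZMod p) := by
  have hford : IsOfFinAddOrder g := isOfFinAddOrder_iff_nsmul_eq_zero.mpr ⟨n, hn, hng⟩
  set m := addOrderOf g with hm
  have hm0 : m ≠ 0 := hford.addOrderOf_pos.ne'
  have hm1 : m ≠ 1 := fun h1 => hg (AddMonoid.addOrderOf_eq_one_iff.mp h1)
  set p := m.minFac with hp
  have hpp : p.Prime := Nat.minFac_prime hm1
  have hpdvd : p ∣ m := Nat.minFac_dvd m
  set g' : G := (m / p) • g with hg'
  have hg'ne : g' ≠ 0 := by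
    intro h0
    have hdvd : m ∣ (m / p) := addOrderOf_dvd_iff_nsmul_eq_zero.mpr (by rw [hg'] at h0; exact h0)
    have hlt : m / p < m := Nat.div_lt_self (Nat.pos_of_ne_zero hm0) hpp.one_lt
    have hpos : 0 < m / p := Nat.div_pos (Nat.le_of_dvd (Nat.pos_of_ne_zero hm0) hpdvd)
      hpp.pos
    exact absurd (Nat.le_of_dvd hpos hdvd) (by omega)
  have hpg' : p • g' = 0 := by
    rw [hg', smul_smul, Nat.mul_div_cancel' hpdvd, hm]
    exact addOrderOf_nsmul_eq_zero g
  have hford' : IsOfFinAddOrder g' := isOfFinAddOrder_iff_nsmul_eq_zero.mpr ⟨p, hpp.pos, hpg'⟩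
  have hordg' : addOrderOf g' = p := by
    have hdvd : addOrderOf g' ∣ p := addOrderOf_dvd_iff_nsmul_eq_zero.mpr hpg'
    rcases (Nat.Prime.eq_one_or_self_of_dvd hpp _ hdvd) with h1 | h1
    · exact absurd (AddMonoid.addOrderOf_eq_one_iff.mp h1) hg'ne
    · exact h1
  have htop := zmultiples_eq_top_of_hfmp h g' hg'ne hford'
  have hcyc : IsAddCyclic G := by
    refine ⟨⟨g', fun x => ?_⟩⟩
    have : x ∈ (AddSubgroup.zmultiples g' : Set G) := htop ▸ Set.mem_univ x
    exact this
  have hcardG : Nat.card G = p := by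
    have h1 : (Set.univ : Set G).ncard = Nat.card G := Set.ncard_univ G
    have h2 : (AddSubgroup.zmultiples g' : Set G).ncard = p := by
      rw [← Nat.card_coe_set_eq, SetLike.coe_sort_coe, Nat.card_zmultiples g', hordg']
    rw [← h1, ← htop, h2]
  exact ⟨p, hpp, ⟨hcardG ▸ (zmodAddCyclicAddEquiv hcyc).symm⟩⟩

end Forward

/-- An abelian group has the finite matching property iff it is torsion-free
or cyclic of prime order. -/
theorem stmt0 (G : Type*) [AddCommGroup G] :
    HasFiniteMatchingProperty G ↔
      ((∀ (g : G) (n : ℕ), 0 < n → n • g = 0 → g = 0) ∨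
        ∃ p : ℕ, p.Prime ∧ Nonempty (G ≃+ ZMod p)) := by
  constructor
  · intro h
    by_cases htf : ∀ (g : G) (n : ℕ), 0 < n → n • g = 0 → g = 0
    · exact Or.inl htf
    · push_neg at htf
      obtain ⟨g, n, hn, hng, hg⟩ := htf
      exact Or.inr (forward_dir h g hg n hn hng)
  · rintro (htf | ⟨p, hp, ⟨e⟩⟩)
    · exact hfmp_of_torsionFree htf
    · exact hfmp_congr e (hfmp_zmod p hp)
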